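/- Let μ be a finitely supported probability measure on ℝ₊, c₁,...,cₙ ∈ ℝ, p = P_{μ⊗n}(Σcᵢ Xᵢ > 0) and q = P_{μ⊗n}(Σcᵢ Xᵢ = 0) with q < 1. Then there exists a probability measure ν on [0,1] with P_{ν⊗n}(Σcᵢ Xᵢ > 0) ≥ p/(1-q) exactly (ε = 0). -/

import Mathlib

open MeasureTheory Set Filter Topology

theorem selfSimilar_exists (A : Finset ℝ) (w : ℝ → ENNReal)
    (hw : ∑ a ∈ A, w a = 1) (η : ℝ) (hη0 : 0 < η) (hη1 : η < 1)
    (b : ℝ → ℝ) (hb : ∀ a ∈ A, b a ∈ Set.Icc 0 (1 - η)) :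
    ∃ ν : Measure ℝ, IsProbabilityMeasure ν ∧ ν (Set.Icc 0 1)ᶜ = 0 ∧
      ν = ∑ a ∈ A, w a • Measure.map (fun y => b a + η * y) ν := by
  classical
  have hwfin : ∀ a ∈ A, w a ≠ ⊤ := by
    intro a ha
    have : w a ≤ 1 := hw ▸ Finset.single_le_sum (fun i _ => zero_le) ha
    exact (this.trans_lt ENNReal.one_lt_top).ne
  set φ : ℝ → ℝ → ℝ := fun a y => b a + η * y with hφdef
  have hφm : ∀ a, Measurable (φ a) := fun a =>
    measurable_const.add (measurable_id.const_mul η)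
  -- the iterates
  set νs : ℕ → Measure ℝ := fun k => Nat.rec (motive := fun _ => Measure ℝ)
    (Measure.dirac 0)
    (fun _ prev => ∑ a ∈ A, w a • Measure.map (φ a) prev) k with hνsdef
  have hνsS : ∀ k, νs (k + 1) = ∑ a ∈ A, w a • Measure.map (φ a) (νs k) := fun k => rfl
  have happly : ∀ k (B : Set ℝ), MeasurableSet B →
      νs (k + 1) B = ∑ a ∈ A, w a * νs k (φ a ⁻¹' B) := by
    intro k B hB
    rw [hνsS k]
    simp only [Measure.coe_finset_sum, Finset.sum_apply, Measure.smul_apply, smul_eq_mul]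
    exact Finset.sum_congr rfl fun a _ => by
      rw [Measure.map_apply (hφm a) hB]
  have huniv : ∀ k, νs k Set.univ = 1 := by
    intro k
    induction k with
    | zero => simp [hνsdef]
    | succ k ih =>
      rw [happly k _ MeasurableSet.univ]
      simp only [Set.preimage_univ, ih, mul_one, hw]
  have hle1 : ∀ k (B : Set ℝ), νs k B ≤ 1 := fun k B =>
    (measure_mono (subset_univ B)).trans (huniv k).le
  have hfin : ∀ k (B : Set ℝ), νs k B ≠ ⊤ := fun k B =>
    ((hle1 k B).trans_lt ENNReal.one_lt_top).ne
  have hmaps : ∀ a ∈ A, ∀ y ∈ Icc (0:ℝ) 1, φ a y ∈ Icc (0:ℝ) 1 := by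
    intro a ha y hy
    obtain ⟨hb0, hb1⟩ := hb a ha
    constructor
    · have : 0 ≤ η * y := mul_nonneg hη0.le hy.1
      simp only [hφdef]; linarith
    · have : η * y ≤ η := by nlinarith [hy.2]
      simp only [hφdef]; linarith
  have hsupp : ∀ k, νs k (Icc (0:ℝ) 1)ᶜ = 0 := by
    intro k
    induction k with
    | zero =>
      have h0 : (0:ℝ) ∈ Icc (0:ℝ) 1 := by constructor <;> norm_num
      simp [hνsdef, Measure.dirac_apply' _ measurableSet_Icc.compl, h0]
    | succ k ih =>
      rw [happly k _ measurableSet_Icc.compl]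
      refine Finset.sum_eq_zero fun a ha => ?_
      have hsub : φ a ⁻¹' (Icc (0:ℝ) 1)ᶜ ⊆ (Icc (0:ℝ) 1)ᶜ := by
        intro y hy
        simp only [mem_preimage, mem_compl_iff] at hy ⊢
        intro hyI
        exact hy (hmaps a ha y hyI)
      rw [measure_mono_null hsub ih, mul_zero]
  -- CDFs
  set F : ℕ → ℝ → ℝ := fun k t => (νs k (Iic t)).toReal with hFdef
  have hF01 : ∀ k t, F k t ∈ Icc (0:ℝ) 1 := fun k t =>
    ⟨ENNReal.toReal_nonneg, by
      rw [hFdef]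
      exact ENNReal.toReal_le_of_le_ofReal zero_le_one (by simpa using hle1 k (Iic t))⟩
  have hFmono : ∀ k, Monotone (F k) := by
    intro k s t hst
    exact ENNReal.toReal_mono (hfin k _) (measure_mono (Iic_subset_Iic.2 hst))
  have hFzero : ∀ k t, t < 0 → F k t = 0 := by
    intro k t ht
    have : Iic t ⊆ (Icc (0:ℝ) 1)ᶜ := by
      intro y hy
      simp only [mem_Iic] at hy
      simp only [mem_compl_iff, mem_Icc, not_and_or, not_le]
      left; linarith
    simp [hFdef, measure_mono_null this (hsupp k)]
  have hFone : ∀ k t, 1 ≤ t → F k t = 1 := by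
    intro k t ht
    have hcompl : νs k (Iic t)ᶜ = 0 := by
      refine measure_mono_null ?_ (hsupp k)
      intro y hy
      simp only [compl_Iic, mem_Ioi] at hy
      simp only [mem_compl_iff, mem_Icc, not_and_or, not_le]
      right; linarith
    have := measure_add_measure_compl (measurableSet_Iic (a := t)) (μ := νs k)
    rw [hcompl, add_zero, huniv k] at this
    simp [hFdef, this]
  have hψpre : ∀ (a : ℝ) (t : ℝ), φ a ⁻¹' Iic t = Iic ((t - b a) / η) := by
    intro a t
    ext y
    simp only [mem_preimage, mem_Iic, hφdef, le_div_iff₀ hη0]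
    constructor <;> intro h <;> nlinarith
  have hrec : ∀ k t, F (k + 1) t = ∑ a ∈ A, (w a).toReal * F k ((t - b a) / η) := by
    intro k t
    rw [hFdef]
    simp only
    rw [happly k _ measurableSet_Iic, ENNReal.toReal_sum
      (fun a ha => ENNReal.mul_ne_top (hwfin a ha) (hfin k _))]
    exact Finset.sum_congr rfl fun a _ => by rw [ENNReal.toReal_mul, hψpre a t]
  have hwnn : ∀ a, 0 ≤ (w a).toReal := fun a => ENNReal.toReal_nonneg
  have hanti : ∀ t, Antitone fun k => F k t := by
    have hstep : ∀ k t, F (k + 1) t ≤ F k t := by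
      intro k
      induction k with
      | zero =>
        intro t
        rcases lt_or_ge t 0 with ht | ht
        · rw [hFzero (0+1) t ht]; exact (hF01 0 t).1
        · have : F 0 t = 1 := by
            have h0 : (0:ℝ) ∈ Iic t := by simpa using ht
            simp [hFdef, hνsdef, Measure.dirac_apply' _ measurableSet_Iic, h0]
          rw [this]
          exact (hF01 (0+1) t).2
      | succ k ih =>
        intro t
        rw [hrec (k+1) t, hrec k t]
        exact Finset.sum_le_sum fun a _ =>
          mul_le_mul_of_nonneg_left (ih _) (hwnn a)
    intro t
    exact antitone_nat_of_succ_le fun k => hstep k t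
  clear hνsS happly huniv hle1 hfin hsupp hψpre hνsdef hFdef
  clear_value F νs
  clear νs
  have hbdd : ∀ t, BddBelow (Set.range fun k => F k t) := by
    intro t
    exact ⟨0, by rintro x ⟨k, rfl⟩; exact (hF01 k t).1⟩
  set Fi : ℝ → ℝ := fun t => ⨅ k, F k t with hFidef
  have htends : ∀ t, Tendsto (fun k => F k t) atTop (𝓝 (Fi t)) := fun t =>
    tendsto_atTop_ciInf (hanti t) (hbdd t)
  have hFimono : Monotone Fi := by
    intro s t hst
    exact le_ciInf fun k => (ciInf_le (hbdd s) k).trans (hFmono k hst)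
  have hFizero : ∀ t, t < 0 → Fi t = 0 := by
    intro t ht
    have : (fun k => F k t) = fun _ => (0:ℝ) := funext fun k => hFzero k t ht
    rw [hFidef]; simp only [this, ciInf_const]
  have hFione : ∀ t, 1 ≤ t → Fi t = 1 := by
    intro t ht
    have : (fun k => F k t) = fun _ => (1:ℝ) := funext fun k => hFone k t ht
    rw [hFidef]; simp only [this, ciInf_const]
  have hFirec : ∀ t, Fi t = ∑ a ∈ A, (w a).toReal * Fi ((t - b a) / η) := by
    intro t
    have h1 : Tendsto (fun k => F (k + 1) t) atTop (𝓝 (Fi t)) :=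
      (htends t).comp (tendsto_add_atTop_nat 1)
    have h2 : Tendsto (fun k => ∑ a ∈ A, (w a).toReal * F k ((t - b a) / η)) atTop
        (𝓝 (∑ a ∈ A, (w a).toReal * Fi ((t - b a) / η))) :=
      tendsto_finset_sum _ fun a _ => (htends ((t - b a) / η)).const_mul _
    have heq : (fun k => F (k + 1) t)
        = fun k => ∑ a ∈ A, (w a).toReal * F k ((t - b a) / η) :=
      funext fun k => hrec k t
    rw [heq] at h1
    exact tendsto_nhds_unique h1 h2
  -- clean up
  clear hrec hanti hbdd htends hF01 hFmono hFzero hFone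
  clear_value Fi
  clear hFidef F
  -- the Stieltjes function
  set G := hFimono.stieltjesFunction with hGdef
  have hGval : ∀ t, G t = Function.rightLim Fi t := fun t => hFimono.stieltjesFunction_eq t
  have hGev : ∀ (t c : ℝ), Fi =ᶠ[𝓝[>] t] (fun _ => c) → G t = c := by
    intro t c hev
    rw [hGval t]
    exact tendsto_nhds_unique (hFimono.tendsto_rightLim t) (tendsto_const_nhds.congr' hev.symm)
  have hGzero : ∀ t, t < 0 → G t = 0 := by
    intro t ht
    refine hGev t 0 ?_
    filter_upwards [Ioo_mem_nhdsGT_of_mem ⟨le_refl t, ht⟩] with u hu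
    exact hFizero u hu.2
  have hGone : ∀ t, 1 ≤ t → G t = 1 := by
    intro t ht
    refine hGev t 1 ?_
    filter_upwards [self_mem_nhdsWithin] with u hu
    exact hFione u (ht.trans (le_of_lt hu))
  have hGrec : ∀ t, G t = ∑ a ∈ A, (w a).toReal * G ((t - b a) / η) := by
    intro t
    have hψt : ∀ a : ℝ, Tendsto (fun u => (u - b a) / η) (𝓝[>] t) (𝓝[>] ((t - b a) / η)) := by
      intro a
      refine tendsto_nhdsWithin_of_tendsto_nhds_of_eventually_within _ ?_ ?_
      · exact (((continuous_id.sub continuous_const).div_const η).tendsto t).mono_left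
          nhdsWithin_le_nhds
      · filter_upwards [self_mem_nhdsWithin] with u hu
        exact mem_Ioi.mpr ((div_lt_div_iff_of_pos_right hη0).2 (sub_lt_sub_right hu _))
    have h2 : Tendsto (fun u => ∑ a ∈ A, (w a).toReal * Fi ((u - b a) / η)) (𝓝[>] t)
        (𝓝 (∑ a ∈ A, (w a).toReal * Function.rightLim Fi ((t - b a) / η))) :=
      tendsto_finset_sum _ fun a _ =>
        ((hFimono.tendsto_rightLim _).comp (hψt a)).const_mul _
    have heq : (fun u => ∑ a ∈ A, (w a).toReal * Fi ((u - b a) / η)) = Fi :=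
      funext fun u => (hFirec u).symm
    rw [heq] at h2
    rw [hGval t]
    have := tendsto_nhds_unique (hFimono.tendsto_rightLim t) h2
    rw [this]
    exact Finset.sum_congr rfl fun a _ => by rw [hGval]
  -- the measure
  have hbot : Tendsto (⇑G) atBot (𝓝 0) := by
    refine tendsto_const_nhds.congr' ?_
    filter_upwards [eventually_lt_atBot (0:ℝ)] with u hu
    exact (hGzero u hu).symm
  have htop : Tendsto (⇑G) atTop (𝓝 1) := by
    refine tendsto_const_nhds.congr' ?_
    filter_upwards [eventually_ge_atTop (1:ℝ)] with u hu
    exact (hGone u hu).symm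
  have hprob : IsProbabilityMeasure G.measure := by
    constructor
    rw [G.measure_univ hbot htop]
    norm_num
  have hIic : ∀ t, G.measure (Iic t) = ENNReal.ofReal (G t) := by
    intro t
    rw [G.measure_Iic hbot, sub_zero]
  have hIio0 : G.measure (Iio 0) = 0 := by
    have h1 : G.measure (Iic (-1)) = 0 := by
      rw [hIic, hGzero (-1) (by norm_num)]; simp
    have hleft : Function.leftLim (⇑G) 0 = 0 := by
      refine tendsto_nhds_unique (G.mono.tendsto_leftLim 0) ?_
      refine tendsto_const_nhds.congr' ?_
      filter_upwards [Ioo_mem_nhdsLT_of_mem (⟨by norm_num, le_refl (0:ℝ)⟩ :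
        (0:ℝ) ∈ Ioc (-1 : ℝ) 0)] with u hu
      exact (hGzero u hu.2).symm
    have h2 : G.measure (Ioo (-1) 0) = 0 := by
      rw [StieltjesFunction.measure_Ioo, hleft, hGzero (-1) (by norm_num)]; simp
    have hun : Iio (0:ℝ) = Iic (-1) ∪ Ioo (-1) 0 := by
      ext u
      simp only [mem_Iio, mem_union, mem_Iic, mem_Ioo]
      constructor
      · intro h; rcases le_or_gt u (-1) with h' | h'
        · exact Or.inl h'
        · exact Or.inr ⟨h', h⟩
      · rintro (h | ⟨_, h⟩) <;> linarith
    rw [hun]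
    exact measure_union_null h1 h2
  have hIoi1 : G.measure (Ioi 1) = 0 := by
    have h1 : G.measure (Iic 1) = 1 := by
      rw [hIic, hGone 1 le_rfl]; simp
    have := measure_add_measure_compl (measurableSet_Iic (a := (1:ℝ))) (μ := G.measure)
    rw [h1, hprob.measure_univ, compl_Iic] at this
    have h2 : (1:ENNReal) + G.measure (Ioi 1) = 1 + 0 := by rw [add_zero]; exact this
    exact (ENNReal.add_right_inj (by norm_num)).1 h2
  refine ⟨G.measure, hprob, ?_, ?_⟩
  · have hsub : (Icc (0:ℝ) 1)ᶜ ⊆ Iio 0 ∪ Ioi 1 := by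
      intro x hx
      simp only [mem_compl_iff, mem_Icc, not_and_or, not_le] at hx
      simpa only [mem_union, mem_Iio, mem_Ioi] using hx
    exact measure_mono_null hsub (measure_union_null hIio0 hIoi1)
  · -- self-similarity
    have hpreIoc : ∀ (a u t : ℝ), φ a ⁻¹' Ioc u t = Ioc ((u - b a) / η) ((t - b a) / η) := by
      intro a u t
      ext y
      simp only [mem_preimage, mem_Ioc, hφdef, div_lt_iff₀ hη0, le_div_iff₀ hη0]
      constructor <;> rintro ⟨h1, h2⟩ <;> constructor <;> nlinarith
    refine Measure.ext_of_Ioc' G.measure _ (fun u t _ => ?_) (fun u t hut => ?_)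
    · rw [StieltjesFunction.measure_Ioc]; exact ENNReal.ofReal_ne_top
    · rw [StieltjesFunction.measure_Ioc]
      have happ : (∑ a ∈ A, w a • Measure.map (fun y => b a + η * y) G.measure) (Ioc u t)
          = ∑ a ∈ A, w a * G.measure (φ a ⁻¹' Ioc u t) := by
        simp only [Measure.coe_finset_sum, Finset.sum_apply, Measure.smul_apply, smul_eq_mul]
        exact Finset.sum_congr rfl fun a _ => by
          rw [Measure.map_apply (hφm a) measurableSet_Ioc]
      rw [happ]
      have hterm : ∀ a ∈ A, w a * G.measure (φ a ⁻¹' Ioc u t)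
          = ENNReal.ofReal ((w a).toReal * (G ((t - b a) / η) - G ((u - b a) / η))) := by
        intro a ha
        rw [hpreIoc a u t, StieltjesFunction.measure_Ioc,
          ENNReal.ofReal_mul (hwnn a), ENNReal.ofReal_toReal (hwfin a ha)]
      rw [Finset.sum_congr rfl hterm, ← ENNReal.ofReal_sum_of_nonneg]
      · congr 1
        have : ∑ a ∈ A, (w a).toReal * (G ((t - b a) / η) - G ((u - b a) / η))
            = (∑ a ∈ A, (w a).toReal * G ((t - b a) / η))
              - ∑ a ∈ A, (w a).toReal * G ((u - b a) / η) := by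
          rw [← Finset.sum_sub_distrib]
          exact Finset.sum_congr rfl fun a _ => by ring
        rw [this, ← hGrec t, ← hGrec u]
      · intro a ha
        have hmono : G ((u - b a) / η) ≤ G ((t - b a) / η) :=
          G.mono (by gcongr)
        exact mul_nonneg (hwnn a) (by linarith)




set_option maxHeartbeats 2000000 in
/-- Amplification, exact version: if μ is a finitely supported probability
measure on ℝ₊ with p = P_{μ⊗n}(Σcᵢ Xᵢ > 0) and q = P_{μ⊗n}(Σcᵢ Xᵢ = 0) < 1,
then there is a probability measure ν on [0,1] with
P_{ν⊗n}(Σcᵢ Xᵢ > 0) ≥ p/(1-q). -/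
theorem stmt16 (n : ℕ) (c : Fin n → ℝ)
    (μ : Measure ℝ) [IsProbabilityMeasure μ] (hμpos : μ (Set.Iio 0) = 0)
    (s : Finset ℝ) (hsupp : μ (↑s : Set ℝ)ᶜ = 0)
    (p q : ℝ)
    (hp : p = ((Measure.pi fun _ : Fin n => μ) {x | 0 < ∑ i, c i * x i}).toReal)
    (hq : q = ((Measure.pi fun _ : Fin n => μ) {x | ∑ i, c i * x i = 0}).toReal)
    (hq1 : q < 1) :
    ∃ ν : Measure ℝ, IsProbabilityMeasure ν ∧ ν (Set.Icc 0 1)ᶜ = 0 ∧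
      p / (1 - q) ≤
        ((Measure.pi fun _ : Fin n => ν) {x | 0 < ∑ i, c i * x i}).toReal := by
  classical
  -- discrete structure of μ
  set A : Finset ℝ := s.filter (fun a => 0 ≤ a) with hAdef
  set w : ℝ → ENNReal := fun a => μ {a} with hwdef
  have hAnull : μ (↑A : Set ℝ)ᶜ = 0 := by
    refine measure_mono_null ?_ (measure_union_null hsupp hμpos)
    intro x hx
    simp only [mem_compl_iff, hAdef, Finset.coe_filter, mem_setOf_eq, Finset.mem_coe,
      not_and_or, not_le] at hx
    rcases hx with hx | hx
    · exact Or.inl hx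
    · exact Or.inr hx
  have hfinset : ∀ t : Finset ℝ, μ (↑t : Set ℝ) = ∑ a ∈ t, w a := by
    intro t
    induction t using Finset.induction with
    | empty => simp
    | @insert x t hx ih =>
      rw [Finset.coe_insert, Set.insert_eq,
        measure_union (Set.disjoint_singleton_left.2 (by simpa using hx)) t.measurableSet,
        ih, Finset.sum_insert hx]
  have hμB : ∀ B : Set ℝ, μ B = ∑ a ∈ A.filter (· ∈ B), w a := by
    intro B
    have h1 : μ B = μ (B ∩ ↑A) := by
      refine le_antisymm ?_ (measure_mono inter_subset_left)
      calc μ B ≤ μ ((B ∩ ↑A) ∪ (↑A : Set ℝ)ᶜ) := by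
            refine measure_mono fun x hx => ?_
            by_cases h : x ∈ (↑A : Set ℝ)
            · exact Or.inl ⟨hx, h⟩
            · exact Or.inr h
        _ ≤ μ (B ∩ ↑A) + μ (↑A : Set ℝ)ᶜ := measure_union_le _ _
        _ = μ (B ∩ ↑A) := by rw [hAnull, add_zero]
    have h2 : B ∩ ↑A = ↑(A.filter (· ∈ B)) := by
      ext x
      simp only [mem_inter_iff, Finset.coe_filter, mem_setOf_eq, Finset.mem_coe,
        Finset.mem_filter]
      tauto
    rw [h1, h2, hfinset]
  have hsum1 : ∑ a ∈ A, w a = 1 := by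
    have h := hμB Set.univ
    simp only [measure_univ, Set.mem_univ, Finset.filter_true] at h
    exact h.symm
  have hAne : A.Nonempty := by
    by_contra h
    rw [Finset.not_nonempty_iff_eq_empty] at h
    rw [h, Finset.sum_empty] at hsum1
    exact one_ne_zero hsum1.symm
  have hA0 : ∀ a ∈ A, (0:ℝ) ≤ a := fun a ha => (Finset.mem_filter.1 ha).2
  -- constants
  set M : ℝ := A.max' hAne with hMdef
  have hM : ∀ a ∈ A, a ≤ M := fun a ha => A.le_max' a ha
  have hM0 : (0:ℝ) ≤ M := hA0 _ (A.max'_mem hAne)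
  set C0 : ℝ := ∑ i, |c i| with hC0def
  have hC0 : (0:ℝ) ≤ C0 := Finset.sum_nonneg fun i _ => abs_nonneg _
  set piF := Fintype.piFinset (fun _ : Fin n => A) with hpiFdef
  have hδex : ∃ δ : ℝ, 0 < δ ∧
      ∀ v ∈ piF, (∑ i, c i * v i) ≠ 0 → δ ≤ |∑ i, c i * v i| := by
    set DD : Finset ℝ :=
      ((piF.image (fun v => ∑ i, c i * v i)).filter (fun x => x ≠ 0)).image (fun x => |x|)
      with hDDdef
    have hmemDD : ∀ v ∈ piF, (∑ i, c i * v i) ≠ 0 → |∑ i, c i * v i| ∈ DD := by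
      intro v hv hne
      exact Finset.mem_image_of_mem _
        (Finset.mem_filter.2 ⟨Finset.mem_image_of_mem _ hv, hne⟩)
    by_cases h : DD.Nonempty
    · refine ⟨DD.min' h, ?_, ?_⟩
      · have hmem := DD.min'_mem h
        obtain ⟨x, hx, hx2⟩ := Finset.mem_image.1 hmem
        obtain ⟨-, hxne⟩ := Finset.mem_filter.1 hx
        rw [← hx2]
        exact abs_pos.2 hxne
      · intro v hv hne
        exact DD.min'_le _ (hmemDD v hv hne)
    · refine ⟨1, one_pos, fun v hv hne => absurd ⟨_, hmemDD v hv hne⟩ h⟩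
  obtain ⟨δ, hδpos, hδle⟩ := hδex
  set η : ℝ := min (1/2) (δ / (2*(C0+1)*(M+1))) with hηdef
  have hη0 : 0 < η := lt_min (by norm_num) (div_pos hδpos (by positivity))
  have hηhalf : η ≤ 1/2 := min_le_left _ _
  have hη1 : η < 1 := lt_of_le_of_lt hηhalf (by norm_num)
  set β : ℝ := (1 - η) / (M + 1) with hβdef
  have hM1 : (0:ℝ) < M + 1 := by linarith
  have hβ0 : 0 < β := div_pos (by linarith) hM1
  have hkey : η * C0 < β * δ := by
    have h1 : η ≤ δ / (2*(C0+1)*(M+1)) := min_le_right _ _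
    have h2 : η * (2*(C0+1)*(M+1)) ≤ δ := by
      rw [← le_div_iff₀ (by positivity)]
      exact h1
    have key' : η * C0 * (M+1) < (1-η) * δ := by
      nlinarith [mul_nonneg (mul_nonneg hη0.le hC0) hM0,
        mul_nonneg (by linarith : (0:ℝ) ≤ 1/2 - η) hδpos.le,
        mul_nonneg hη0.le hM0]
    rw [hβdef, div_mul_eq_mul_div, lt_div_iff₀ hM1]
    exact key'
  set b : ℝ → ℝ := fun a => β * a with hbdef
  have hb : ∀ a ∈ A, b a ∈ Set.Icc 0 (1 - η) := by
    intro a ha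
    refine ⟨mul_nonneg hβ0.le (hA0 a ha), ?_⟩
    show β * a ≤ 1 - η
    · have h1 : β * a ≤ β * M := mul_le_mul_of_nonneg_left (hM a ha) hβ0.le
      have h2 : β * M ≤ 1 - η := by
        rw [hβdef, div_mul_eq_mul_div, div_le_iff₀ hM1]
        nlinarith [hη1.le]
      linarith
  obtain ⟨ν, hνprob, hνsupp, hνself⟩ := selfSimilar_exists A w hsum1 η hη0 hη1 b hb
  haveI : IsProbabilityMeasure ν := hνprob
  have hbval : ∀ a : ℝ, b a = β * a := fun a => rfl
  clear hηdef hβdef hbdef hMdef hAdef hwdef hAnull hfinset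
  clear_value A w M C0 η β b
  refine ⟨ν, hνprob, hνsupp, ?_⟩
  -- measurability of the events
  have hsummeas : Measurable (fun x : Fin n → ℝ => ∑ i, c i * x i) :=
    Finset.measurable_sum _ fun i _ => (measurable_pi_apply i).const_mul _
  have hE : MeasurableSet {x : Fin n → ℝ | 0 < ∑ i, c i * x i} :=
    measurableSet_lt measurable_const hsummeas
  have hE0 : MeasurableSet {x : Fin n → ℝ | ∑ i, c i * x i = 0} :=
    hsummeas (measurableSet_singleton 0)
  -- discrete decomposition of pi μ
  have hindic : ∀ (B' : Set ℝ), ∑ a ∈ A, w a * (B'.indicator (fun _ => (1:ENNReal)) a)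
      = μ B' := by
    intro B'
    rw [hμB B', Finset.sum_filter (fun a => a ∈ B') w]
    refine Finset.sum_congr rfl fun a _ => ?_
    by_cases h : a ∈ B' <;> simp [Set.indicator_apply, h]
  have hpiμ : Measure.pi (fun _ : Fin n => μ)
      = ∑ v ∈ piF, (∏ i, w (v i)) • Measure.dirac v := by
    apply Measure.pi_eq
    intro B hB
    simp only [Measure.coe_finset_sum, Finset.sum_apply, Measure.smul_apply, smul_eq_mul]
    have hdir : ∀ v : Fin n → ℝ, Measure.dirac v (Set.pi univ B)
        = ∏ i, (B i).indicator (fun _ => (1:ENNReal)) (v i) := by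
      intro v
      by_cases hv : ∀ i, v i ∈ B i
      · rw [Measure.dirac_apply_of_mem (show v ∈ Set.pi univ B from fun i _ => hv i)]
        rw [Finset.prod_congr rfl fun i _ => Set.indicator_of_mem (hv i) _]
        simp
      · push_neg at hv
        obtain ⟨i, hi⟩ := hv
        rw [Measure.dirac_apply' _ (MeasurableSet.univ_pi hB),
          Set.indicator_of_notMem (by simpa [Set.mem_pi] using ⟨i, hi⟩)]
        exact (Finset.prod_eq_zero (Finset.mem_univ i)
          (Set.indicator_of_notMem hi _)).symm
    calc ∑ v ∈ piF, (∏ i, w (v i)) * Measure.dirac v (Set.pi univ B)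
        = ∑ v ∈ piF, ∏ i, (w (v i) * (B i).indicator (fun _ => (1:ENNReal)) (v i)) := by
          refine Finset.sum_congr rfl fun v _ => ?_
          rw [hdir v, ← Finset.prod_mul_distrib]
      _ = ∏ i, ∑ a ∈ A, w a * (B i).indicator (fun _ => (1:ENNReal)) a := by
          rw [hpiFdef]
          exact (Finset.prod_univ_sum (fun _ => A)
            (fun i a => w a * (B i).indicator (fun _ => (1:ENNReal)) a)).symm
      _ = ∏ i, μ (B i) := Finset.prod_congr rfl fun i _ => hindic (B i)
  have hpiμ_apply : ∀ (X : Set (Fin n → ℝ)), MeasurableSet X →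
      (Measure.pi fun _ : Fin n => μ) X = ∑ v ∈ piF.filter (· ∈ X), ∏ i, w (v i) := by
    intro X hX
    rw [hpiμ]
    simp only [Measure.coe_finset_sum, Finset.sum_apply, Measure.smul_apply, smul_eq_mul]
    rw [Finset.sum_filter]
    refine Finset.sum_congr rfl fun v _ => ?_
    rw [Measure.dirac_apply' _ hX]
    by_cases h : v ∈ X <;> simp [Set.indicator_apply, h]
  -- decomposition of pi ν
  have hφm : ∀ a : ℝ, Measurable (fun y : ℝ => b a + η * y) := fun a =>
    (measurable_id.const_mul η).const_add _
  have hself' : ∀ (B' : Set ℝ), MeasurableSet B' →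
      ∑ a ∈ A, w a * ν ((fun y => b a + η * y) ⁻¹' B') = ν B' := by
    intro B' hB'
    conv_rhs => rw [hνself]
    simp only [Measure.coe_finset_sum, Finset.sum_apply, Measure.smul_apply, smul_eq_mul]
    exact Finset.sum_congr rfl fun a _ => by rw [Measure.map_apply (hφm a) hB']
  have hΦm : ∀ v : Fin n → ℝ,
      Measurable (fun y : Fin n → ℝ => fun i => b (v i) + η * y i) :=
    fun v => measurable_pi_lambda _ fun i =>
      ((measurable_pi_apply i : Measurable fun x : Fin n → ℝ => x i).const_mul η).const_add _
  have hpiν : Measure.pi (fun _ : Fin n => ν) = ∑ v ∈ piF, (∏ i, w (v i)) •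
      Measure.map (fun y : Fin n → ℝ => fun i => b (v i) + η * y i)
        (Measure.pi (fun _ : Fin n => ν)) := by
    apply Measure.pi_eq
    intro B hB
    simp only [Measure.coe_finset_sum, Finset.sum_apply, Measure.smul_apply, smul_eq_mul]
    have hstep : ∀ v : Fin n → ℝ,
        (Measure.map (fun y : Fin n → ℝ => fun i => b (v i) + η * y i)
          (Measure.pi (fun _ : Fin n => ν))) (Set.pi univ B)
        = ∏ i, ν ((fun y => b (v i) + η * y) ⁻¹' B i) := by
      intro v
      rw [Measure.map_apply (hΦm v) (MeasurableSet.univ_pi hB)]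
      have hpre : (fun y : Fin n → ℝ => fun i => b (v i) + η * y i) ⁻¹' (Set.pi univ B)
          = Set.pi univ (fun i => (fun y => b (v i) + η * y) ⁻¹' B i) := by
        ext y
        simp [Set.mem_pi]
      rw [hpre, Measure.pi_pi]
    calc ∑ v ∈ piF, (∏ i, w (v i)) *
          (Measure.map (fun y : Fin n → ℝ => fun i => b (v i) + η * y i)
            (Measure.pi (fun _ : Fin n => ν))) (Set.pi univ B)
        = ∑ v ∈ piF, ∏ i, (w (v i) * ν ((fun y => b (v i) + η * y) ⁻¹' B i)) := by
          refine Finset.sum_congr rfl fun v _ => ?_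
          rw [hstep v, ← Finset.prod_mul_distrib]
      _ = ∏ i, ∑ a ∈ A, w a * ν ((fun y => b a + η * y) ⁻¹' B i) := by
          rw [hpiFdef]
          exact (Finset.prod_univ_sum (fun _ => A)
            (fun i a => w a * ν ((fun y => b a + η * y) ⁻¹' B i))).symm
      _ = ∏ i, ν (B i) := Finset.prod_congr rfl fun i _ => hself' (B i) (hB i)
  -- the box
  set box : Set (Fin n → ℝ) := Set.pi univ (fun _ => Icc (0:ℝ) 1) with hboxdef
  have hboxc : (Measure.pi fun _ : Fin n => ν) boxᶜ = 0 := by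
    have hsub : boxᶜ ⊆ ⋃ i, Function.eval i ⁻¹' (Icc (0:ℝ) 1)ᶜ := by
      intro x hx
      simp only [hboxdef, mem_compl_iff, Set.mem_pi, mem_univ, forall_true_left,
        not_forall] at hx
      obtain ⟨i, hi⟩ := hx
      exact mem_iUnion.2 ⟨i, hi⟩
    exact measure_mono_null hsub (measure_iUnion_null fun i =>
      Measure.pi_eval_preimage_null _ hνsupp)
  have hXbox : ∀ X : Set (Fin n → ℝ), (Measure.pi fun _ : Fin n => ν) X
      = (Measure.pi fun _ : Fin n => ν) (X ∩ box) := by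
    intro X
    refine le_antisymm ?_ (measure_mono inter_subset_left)
    calc (Measure.pi fun _ : Fin n => ν) X
        ≤ (Measure.pi fun _ : Fin n => ν) ((X ∩ box) ∪ boxᶜ) := by
          refine measure_mono fun x hx => ?_
          by_cases h : x ∈ box
          · exact Or.inl ⟨hx, h⟩
          · exact Or.inr h
      _ ≤ (Measure.pi fun _ : Fin n => ν) (X ∩ box)
            + (Measure.pi fun _ : Fin n => ν) boxᶜ := measure_union_le _ _
      _ = (Measure.pi fun _ : Fin n => ν) (X ∩ box) := by rw [hboxc, add_zero]
  have hbox1 : (Measure.pi fun _ : Fin n => ν) box = 1 := by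
    have h := hXbox Set.univ
    rw [measure_univ, Set.univ_inter] at h
    exact h.symm
  have hybound : ∀ y ∈ box, |∑ i, c i * y i| ≤ C0 := by
    intro y hy
    simp only [hboxdef, Set.mem_pi, mem_univ, forall_true_left] at hy
    calc |∑ i, c i * y i| ≤ ∑ i, |c i * y i| := Finset.abs_sum_le_sum_abs _ _
      _ ≤ ∑ i, |c i| := by
          refine Finset.sum_le_sum fun i _ => ?_
          rw [abs_mul]
          have hyi := hy i
          have h1 : |y i| ≤ 1 := abs_le.2 ⟨by linarith [hyi.1], hyi.2⟩
          calc |c i| * |y i| ≤ |c i| * 1 :=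
                mul_le_mul_of_nonneg_left h1 (abs_nonneg _)
            _ = |c i| := mul_one _
      _ = C0 := hC0def.symm
  set E : Set (Fin n → ℝ) := {x | 0 < ∑ i, c i * x i} with hEdef
  set E0 : Set (Fin n → ℝ) := {x | (∑ i, c i * x i) = 0} with hE0def
  set r : ENNReal := (Measure.pi fun _ : Fin n => ν) E with hrdef
  have hcase : ∀ v ∈ piF,
      (Measure.pi fun _ : Fin n => ν)
        ((fun y : Fin n → ℝ => fun i => b (v i) + η * y i) ⁻¹' E)
      = if 0 < ∑ i, c i * v i then 1 else if (∑ i, c i * v i) = 0 then r else 0 := by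
    intro v hv
    have hexp : ∀ y : Fin n → ℝ, ∑ i, c i * (b (v i) + η * y i)
        = β * (∑ i, c i * v i) + η * ∑ i, c i * y i := by
      intro y
      rw [Finset.mul_sum, Finset.mul_sum, ← Finset.sum_add_distrib]
      refine Finset.sum_congr rfl fun i _ => ?_
      rw [hbval (v i)]
      ring
    by_cases hS : 0 < ∑ i, c i * v i
    · rw [if_pos hS]
      have h1 : δ ≤ ∑ i, c i * v i := by
        have h := hδle v hv (ne_of_gt hS)
        rwa [abs_of_pos hS] at h
      have hge : box ⊆ (fun y : Fin n → ℝ => fun i => b (v i) + η * y i) ⁻¹' E := by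
        intro y hy
        have h2 := hybound y hy
        have h3 := abs_le.1 h2
        simp only [Set.mem_preimage, hEdef, Set.mem_setOf_eq, hexp y]
        nlinarith [mul_le_mul_of_nonneg_left h1 hβ0.le, hkey, hη0]
      exact le_antisymm prob_le_one (hbox1 ▸ measure_mono hge)
    · by_cases hS0 : (∑ i, c i * v i) = 0
      · rw [if_neg hS, if_pos hS0]
        have hinter : ((fun y : Fin n → ℝ => fun i => b (v i) + η * y i) ⁻¹' E) ∩ box
            = E ∩ box := by
          ext y
          simp only [mem_inter_iff, Set.mem_preimage, hEdef, Set.mem_setOf_eq, hexp y,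
            hS0, mul_zero, zero_add]
          constructor
          · rintro ⟨h1, h2⟩
            refine ⟨?_, h2⟩
            nlinarith [hη0]
          · rintro ⟨h1, h2⟩
            exact ⟨by nlinarith [hη0], h2⟩
        rw [hXbox, hinter, ← hXbox]
      · rw [if_neg hS, if_neg hS0]
        have hS' : (∑ i, c i * v i) < 0 := lt_of_le_of_ne (not_lt.1 hS) hS0
        have h1 : δ ≤ -(∑ i, c i * v i) := by
          have h := hδle v hv hS0
          rwa [abs_of_neg hS'] at h
        have hempty : ((fun y : Fin n → ℝ => fun i => b (v i) + η * y i) ⁻¹' E) ∩ box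
            = ∅ := by
          ext y
          simp only [mem_inter_iff, Set.mem_preimage, hEdef, Set.mem_setOf_eq, hexp y,
            mem_empty_iff_false, iff_false, not_and]
          intro h2 hy
          have h3 := abs_le.1 (hybound y hy)
          nlinarith [mul_le_mul_of_nonneg_left h1 hβ0.le, hkey, hη0]
        rw [hXbox, hempty, measure_empty]
  -- the fixed point equation
  have hrsum : r = (∑ v ∈ piF.filter (fun v => 0 < ∑ i, c i * v i), ∏ i, w (v i))
      + (∑ v ∈ piF.filter (fun v => (∑ i, c i * v i) = 0), ∏ i, w (v i)) * r := by
    conv_lhs => rw [hrdef, hpiν]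
    simp only [Measure.coe_finset_sum, Finset.sum_apply, Measure.smul_apply, smul_eq_mul]
    have hterm : ∀ v ∈ piF, (∏ i, w (v i)) *
          (Measure.map (fun y : Fin n → ℝ => fun i => b (v i) + η * y i)
            (Measure.pi (fun _ : Fin n => ν))) E
        = (if 0 < ∑ i, c i * v i then ∏ i, w (v i) else 0)
          + (if (∑ i, c i * v i) = 0 then (∏ i, w (v i)) * r else 0) := by
      intro v hv
      rw [Measure.map_apply (hΦm v) hE, hcase v hv]
      by_cases h1 : 0 < ∑ i, c i * v i
      · have h2 : ¬ (∑ i, c i * v i) = 0 := ne_of_gt h1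
        simp [h1, h2]
      · by_cases h2 : (∑ i, c i * v i) = 0 <;> simp [h1, h2]
    rw [Finset.sum_congr rfl hterm, Finset.sum_add_distrib,
      ← Finset.sum_filter, ← Finset.sum_filter, ← Finset.sum_mul]
  -- identification with p and q
  have hP : (Measure.pi fun _ : Fin n => μ) E
      = ∑ v ∈ piF.filter (fun v => 0 < ∑ i, c i * v i), ∏ i, w (v i) := by
    rw [hpiμ_apply E hE]
    exact Finset.sum_congr (Finset.filter_congr fun v _ => by
      simp [hEdef, Set.mem_setOf_eq]) (fun _ _ => rfl)
  have hQ : (Measure.pi fun _ : Fin n => μ) E0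
      = ∑ v ∈ piF.filter (fun v => (∑ i, c i * v i) = 0), ∏ i, w (v i) := by
    rw [hpiμ_apply E0 hE0]
    exact Finset.sum_congr (Finset.filter_congr fun v _ => by
      simp [hE0def, Set.mem_setOf_eq]) (fun _ _ => rfl)
  have hPfin : (∑ v ∈ piF.filter (fun v => 0 < ∑ i, c i * v i), ∏ i, w (v i)) ≠ ⊤ :=
    hP ▸ measure_ne_top _ _
  have hQfin : (∑ v ∈ piF.filter (fun v => (∑ i, c i * v i) = 0), ∏ i, w (v i)) ≠ ⊤ :=
    hQ ▸ measure_ne_top _ _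
  have hrfin : r ≠ ⊤ := measure_ne_top _ _
  have hreq : r.toReal
      = (∑ v ∈ piF.filter (fun v => 0 < ∑ i, c i * v i), ∏ i, w (v i)).toReal
        + (∑ v ∈ piF.filter (fun v => (∑ i, c i * v i) = 0), ∏ i, w (v i)).toReal
          * r.toReal := by
    conv_lhs => rw [hrsum]
    rw [ENNReal.toReal_add hPfin (ENNReal.mul_ne_top hQfin hrfin), ENNReal.toReal_mul]
  have hpP : p = (∑ v ∈ piF.filter (fun v => 0 < ∑ i, c i * v i), ∏ i, w (v i)).toReal := by
    rw [hp, hP]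
  have hqQ : q = (∑ v ∈ piF.filter (fun v => (∑ i, c i * v i) = 0), ∏ i, w (v i)).toReal := by
    rw [hq, hQ]
  rw [← hpP, ← hqQ] at hreq
  rw [div_le_iff₀ (by linarith : (0:ℝ) < 1 - q)]
  have h2 : r.toReal * (1 - q) = r.toReal - q * r.toReal := by ring
  linarith
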